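/- Let G be a Gauss diagram that can be transformed by a sequence of n crossing changes into a Gauss diagram G' whose writhe polynomial vanishes, W_{G'}(t) = 0. Then the odd writhe satisfies |J(G)| ≤ 2n, where J(G) = ∑_{c ∈ Odd(G)} w(c) is the sum of the writhes of the chords of G whose index is odd (equivalently J(G) = ∑_{k odd} J_k(G)). -/

import Mathlib

open scoped Classical

/-- A Gauss diagram with `n` chords: the `2n` marked points live on the cyclic group
`ZMod (2*n)` (the oriented circle); each chord `i` is the ordered pair
`(tail i, head i)` of marked points and carries a sign (writhe) `sign i ∈ {+1, -1}`;
all `2n` endpoints are distinct. -/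
structure GaussDiagram (n : ℕ) where
  tail : Fin n → ZMod (2 * n)
  head : Fin n → ZMod (2 * n)
  sign : Fin n → ℤ
  sign_mem : ∀ i, sign i = 1 ∨ sign i = -1
  endpoints_inj : Function.Injective
    (fun p : Fin n × Bool => if p.2 then head p.1 else tail p.1)

namespace GaussDiagram

variable {n : ℕ}

/-- `x` lies on the open arc running in the circle's orientation from `a` to `b`. -/
def arcMem (a b x : ZMod (2 * n)) : Prop :=
  0 < (x - a).val ∧ (x - a).val < (b - a).val

/-- `x` lies on the open oriented arc from the tail to the head of chord `i`. -/
def inArc (G : GaussDiagram n) (i : Fin n) (x : ZMod (2 * n)) : Prop :=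
  arcMem (G.tail i) (G.head i) x

/-- Chords `i` and `j` are linked: exactly one endpoint of `j` lies on the open
oriented arc from the tail to the head of `i`. -/
def linked (G : GaussDiagram n) (i j : Fin n) : Prop :=
  Xor' (G.inArc i (G.tail j)) (G.inArc i (G.head j))

/-- Chord `j` crosses chord `i` from right to left. -/
def crossesRL (G : GaussDiagram n) (i j : Fin n) : Prop :=
  G.linked i j ∧ G.inArc i (G.head j)

/-- Chord `j` crosses chord `i` from left to right. -/
def crossesLR (G : GaussDiagram n) (i j : Fin n) : Prop :=
  G.linked i j ∧ G.inArc i (G.tail j)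

/-- The index of the chord `i`: `Ind(i) = r₊ − r₋ − l₊ + l₋`. -/
noncomputable def ind (G : GaussDiagram n) (i : Fin n) : ℤ :=
  ((Finset.univ.filter fun j => G.crossesRL i j ∧ G.sign j = 1).card : ℤ)
    - ((Finset.univ.filter fun j => G.crossesRL i j ∧ G.sign j = -1).card : ℤ)
    - ((Finset.univ.filter fun j => G.crossesLR i j ∧ G.sign j = 1).card : ℤ)
    + ((Finset.univ.filter fun j => G.crossesLR i j ∧ G.sign j = -1).card : ℤ)

/-- The `k`-th writhe `J_k(G)`: the number of positive chords of index `k` minus the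
number of negative chords of index `k`. -/
noncomputable def J (G : GaussDiagram n) (k : ℤ) : ℤ :=
  ((Finset.univ.filter fun i => G.ind i = k ∧ G.sign i = 1).card : ℤ)
    - ((Finset.univ.filter fun i => G.ind i = k ∧ G.sign i = -1).card : ℤ)

/-- The writhe polynomial `W_G(t) = ∑_{Ind(c) ≠ 0} w(c) t^{Ind(c)} = ∑_{k ≠ 0} J_k(G) t^k`. -/
noncomputable def writhePoly (G : GaussDiagram n) : LaurentPolynomial ℤ :=
  ∑ i ∈ Finset.univ.filter (fun i => G.ind i ≠ 0),
    LaurentPolynomial.C (G.sign i) * LaurentPolynomial.T (G.ind i)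

/-- The odd writhe `J(G) = ∑_{c ∈ Odd(G)} w(c)`. -/
noncomputable def oddWrithe (G : GaussDiagram n) : ℤ :=
  ∑ i ∈ Finset.univ.filter (fun i => Odd (G.ind i)), G.sign i

/-- `G'` is obtained from `G` by a crossing change at the chord `c`: the tail and head
of `c` are interchanged and its sign is negated, all other chords being unchanged. -/
def IsCrossingChangeAt (G G' : GaussDiagram n) (c : Fin n) : Prop :=
  G'.tail c = G.head c ∧ G'.head c = G.tail c ∧ G'.sign c = -G.sign c ∧
    ∀ j : Fin n, j ≠ c →
      G'.tail j = G.tail j ∧ G'.head j = G.head j ∧ G'.sign j = G.sign j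

/-- `G'` is obtained from `G` by a crossing change (at some chord). -/
def IsCrossingChange (G G' : GaussDiagram n) : Prop :=
  ∃ c, IsCrossingChangeAt G G' c

/-- `G'` is obtained from `G` by a sequence of `m` crossing changes. -/
def ChangedBy (m : ℕ) (G G' : GaussDiagram n) : Prop :=
  ∃ f : ℕ → GaussDiagram n, f 0 = G ∧ f m = G' ∧
    ∀ i < m, IsCrossingChange (f i) (f (i + 1))

end GaussDiagram

namespace GaussDiagram

variable {n : ℕ}

lemma arcMem_swap [NeZero (2 * n)] {a b x : ZMod (2 * n)} (hab : b ≠ a) (hxa : x ≠ a)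
    (hxb : x ≠ b) : arcMem b a x ↔ ¬ arcMem (n := n) a b x := by
  have hN : 0 < 2 * n := Nat.pos_of_ne_zero (NeZero.ne _)
  have hu0 : 0 < (x - a).val := ZMod.val_pos.2 (sub_ne_zero.2 hxa)
  have hw0 : 0 < (x - b).val := ZMod.val_pos.2 (sub_ne_zero.2 hxb)
  have hv0 : 0 < (b - a).val := ZMod.val_pos.2 (sub_ne_zero.2 hab)
  have hvN : (b - a).val < 2 * n := ZMod.val_lt _
  have hwN : (x - b).val < 2 * n := ZMod.val_lt _
  have key : (x - a).val = ((x - b).val + (b - a).val) % (2 * n) := by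
    rw [← ZMod.val_add]
    congr 1
    ring
  have key2 : (a - b).val = 2 * n - (b - a).val := by
    have h : a - b = -(b - a) := by ring
    rw [h, ZMod.neg_val, if_neg (sub_ne_zero.2 hab)]
  unfold arcMem
  rw [key2]
  rcases Nat.lt_or_ge ((x - b).val + (b - a).val) (2 * n) with h | h
  · rw [Nat.mod_eq_of_lt h] at key
    omega
  · rw [Nat.mod_eq_sub_mod h, Nat.mod_eq_of_lt (by omega)] at key
    omega

lemma tail_ne_head (G : GaussDiagram n) (i j : Fin n) : G.tail i ≠ G.head j := by
  intro h
  have h2 : (fun p : Fin n × Bool => if p.2 then G.head p.1 else G.tail p.1) (i, false)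
      = (fun p : Fin n × Bool => if p.2 then G.head p.1 else G.tail p.1) (j, true) := by
    simpa using h
  simpa using G.endpoints_inj h2

lemma tail_ne_tail (G : GaussDiagram n) {i j : Fin n} (hij : i ≠ j) : G.tail i ≠ G.tail j := by
  intro h
  have h2 : (fun p : Fin n × Bool => if p.2 then G.head p.1 else G.tail p.1) (i, false)
      = (fun p : Fin n × Bool => if p.2 then G.head p.1 else G.tail p.1) (j, false) := by
    simpa using h
  exact hij (by simpa using G.endpoints_inj h2)

lemma head_ne_head (G : GaussDiagram n) {i j : Fin n} (hij : i ≠ j) : G.head i ≠ G.head j := by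
  intro h
  have h2 : (fun p : Fin n × Bool => if p.2 then G.head p.1 else G.tail p.1) (i, true)
      = (fun p : Fin n × Bool => if p.2 then G.head p.1 else G.tail p.1) (j, true) := by
    simpa using h
  exact hij (by simpa using G.endpoints_inj h2)

lemma ind_eq_sum (G : GaussDiagram n) (i : Fin n) :
    G.ind i = ∑ j : Fin n, ((if G.crossesRL i j then G.sign j else 0)
      - (if G.crossesLR i j then G.sign j else 0)) := by
  unfold ind
  rw [Finset.card_filter, Finset.card_filter, Finset.card_filter, Finset.card_filter]
  push_cast
  rw [← Finset.sum_sub_distrib, ← Finset.sum_sub_distrib, ← Finset.sum_add_distrib]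
  apply Finset.sum_congr rfl
  intro j _
  rcases G.sign_mem j with h | h <;> split_ifs <;> simp_all

lemma not_linked_self (G : GaussDiagram n) (c : Fin n) : ¬ G.linked c c := by
  unfold linked inArc arcMem
  simp [Xor', Xor]

lemma ind_eq_of_crossingChangeAt {G G' : GaussDiagram n} {c : Fin n}
    (hcc : IsCrossingChangeAt G G' c) {j : Fin n} (hj : j ≠ c) : G'.ind j = G.ind j := by
  obtain ⟨ht, hh, hs, ho⟩ := hcc
  have hIA : ∀ x, G'.inArc j x ↔ G.inArc j x := by
    intro x
    unfold inArc
    rw [(ho j hj).1, (ho j hj).2.1]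
  rw [ind_eq_sum, ind_eq_sum]
  apply Finset.sum_congr rfl
  intro k _
  by_cases hk : k = c
  · subst hk
    have hL : G'.linked j k ↔ G.linked j k := by
      unfold linked
      rw [ht, hh, hIA, hIA]
      exact Iff.of_eq (xor_comm _ _)
    have hRL : G'.crossesRL j k ↔ G.crossesLR j k := by
      unfold crossesRL crossesLR
      rw [hh, hIA, hL]
    have hLR : G'.crossesLR j k ↔ G.crossesRL j k := by
      unfold crossesLR crossesRL
      rw [ht, hIA, hL]
    rw [hs]
    split_ifs with h1 h2 h2 <;> simp_all
  · have hRL : G'.crossesRL j k ↔ G.crossesRL j k := by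
      unfold crossesRL linked
      rw [(ho k hk).1, (ho k hk).2.1]
      simp only [hIA]
    have hLR : G'.crossesLR j k ↔ G.crossesLR j k := by
      unfold crossesLR linked
      rw [(ho k hk).1, (ho k hk).2.1]
      simp only [hIA]
    rw [(ho k hk).2.2]
    split_ifs with h1 h2 h2 <;> simp_all

lemma ind_neg_of_crossingChangeAt {G G' : GaussDiagram n} {c : Fin n}
    (hcc : IsCrossingChangeAt G G' c) : G'.ind c = -G.ind c := by
  haveI : NeZero (2 * n) := ⟨by have := c.pos; omega⟩
  obtain ⟨ht, hh, hs, ho⟩ := hcc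
  have hne : G.head c ≠ G.tail c := (G.tail_ne_head c c).symm
  have hIA : ∀ x, x ≠ G.tail c → x ≠ G.head c → (G'.inArc c x ↔ ¬ G.inArc c x) := by
    intro x h1 h2
    unfold inArc
    rw [ht, hh]
    exact arcMem_swap hne h1 h2
  rw [ind_eq_sum, ind_eq_sum, ← Finset.sum_neg_distrib]
  apply Finset.sum_congr rfl
  intro k _
  by_cases hk : k = c
  · subst hk
    rw [if_neg (fun h => G'.not_linked_self k h.1), if_neg (fun h => G'.not_linked_self k h.1),
      if_neg (fun h => G.not_linked_self k h.1), if_neg (fun h => G.not_linked_self k h.1)]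
    ring
  · have htk : G.tail k ≠ G.tail c := G.tail_ne_tail hk
    have htk2 : G.tail k ≠ G.head c := G.tail_ne_head k c
    have hhk : G.head k ≠ G.tail c := (G.tail_ne_head c k).symm
    have hhk2 : G.head k ≠ G.head c := G.head_ne_head hk
    have hP := hIA (G.tail k) htk htk2
    have hQ := hIA (G.head k) hhk hhk2
    have hL : G'.linked c k ↔ G.linked c k := by
      unfold linked
      rw [(ho k hk).1, (ho k hk).2.1, hP, hQ]
      exact xor_not_not
    have hRL : G'.crossesRL c k ↔ G.crossesLR c k := by
      unfold crossesRL crossesLR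
      rw [(ho k hk).2.1, hQ, hL]
      unfold linked Xor' Xor
      tauto
    have hLR : G'.crossesLR c k ↔ G.crossesRL c k := by
      unfold crossesLR crossesRL
      rw [(ho k hk).1, hP, hL]
      unfold linked Xor' Xor
      tauto
    rw [(ho k hk).2.2]
    split_ifs with h1 h2 h2 <;> simp_all

lemma abs_oddWrithe_sub_le {G G' : GaussDiagram n} (hc : IsCrossingChange G G') :
    |G'.oddWrithe - G.oddWrithe| ≤ 2 := by
  obtain ⟨c, hcc⟩ := hc
  have hOdd : ∀ j, Odd (G'.ind j) ↔ Odd (G.ind j) := by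
    intro j
    by_cases hj : j = c
    · subst hj
      rw [ind_neg_of_crossingChangeAt hcc]
      exact odd_neg
    · rw [ind_eq_of_crossingChangeAt hcc hj]
  have hfil : (Finset.univ.filter fun j => Odd (G'.ind j))
      = (Finset.univ.filter fun j => Odd (G.ind j)) := by
    apply Finset.filter_congr
    intro x _
    exact hOdd x
  have hW : G'.oddWrithe - G.oddWrithe
      = ∑ j ∈ Finset.univ.filter (fun j => Odd (G.ind j)),
          (if j = c then -2 * G.sign c else 0) := by
    unfold oddWrithe
    rw [hfil, ← Finset.sum_sub_distrib]
    apply Finset.sum_congr rfl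
    intro j _
    by_cases hj : j = c
    · subst hj
      rw [if_pos rfl, hcc.2.2.1]
      ring
    · rw [if_neg hj, (hcc.2.2.2 j hj).2.2]
      ring
  rw [hW, Finset.sum_ite_eq' _ c (fun _ => -2 * G.sign c)]
  rcases G.sign_mem c with h | h <;> split_ifs <;> simp [h]

lemma oddWrithe_eq_zero_of_writhePoly_eq_zero (G : GaussDiagram n)
    (h0 : G.writhePoly = 0) : G.oddWrithe = 0 := by
  have hF : (G.writhePoly).coeff.sum (fun k a => if Odd k then a else 0) = 0 := by
    rw [h0]
    simp
  unfold writhePoly at hF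
  rw [AddMonoidAlgebra.coeff_sum] at hF
  rw [← Finsupp.sum_finset_sum_index (fun a => by simp)
    (fun a b₁ b₂ => by split <;> simp)] at hF
  have hsingle : ∀ i : Fin n,
      (LaurentPolynomial.C (G.sign i) * LaurentPolynomial.T (G.ind i)).coeff.sum
        (fun k a => if Odd k then a else 0) = if Odd (G.ind i) then G.sign i else 0 := by
    intro i
    rw [← LaurentPolynomial.single_eq_C_mul_T, AddMonoidAlgebra.coeff_single]
    exact Finsupp.sum_single_index (by simp)
  rw [Finset.sum_congr rfl (fun i _ => hsingle i)] at hF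
  refine Eq.trans ?_ hF
  unfold oddWrithe
  rw [Finset.sum_filter]
  symm
  apply Finset.sum_subset (Finset.filter_subset _ _)
  intro x _ hx
  simp only [Finset.mem_filter, Finset.mem_univ, true_and, not_not] at hx
  rw [if_neg]
  rw [hx]
  simp [Int.odd_iff]

end GaussDiagram

/-- if `G` can be transformed by a sequence of `m` crossing changes into a
Gauss diagram `G'` with `W_{G'}(t) = 0`, then the odd writhe satisfies `|J(G)| ≤ 2m`. -/
theorem abs_oddWrithe_le_of_changedBy {n : ℕ} (m : ℕ) (G G' : GaussDiagram n)
    (h : GaussDiagram.ChangedBy m G G') (h0 : G'.writhePoly = 0) :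
    |G.oddWrithe| ≤ 2 * (m : ℤ) := by
  classical
  obtain ⟨f, hf0, hfm, hstep⟩ := h
  have key : ∀ k : ℕ, (∀ i < k, GaussDiagram.IsCrossingChange (f i) (f (i + 1))) →
      |(f 0).oddWrithe| ≤ |(f k).oddWrithe| + 2 * (k : ℤ) := by
    intro k
    induction k with
    | zero => simp
    | succ k ih =>
      intro hk
      have h1 := ih (fun i hi => hk i (by omega))
      have h2 := GaussDiagram.abs_oddWrithe_sub_le (hk k (by omega))
      have h3 : |(f k).oddWrithe| ≤ |(f (k + 1)).oddWrithe| + 2 := by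
        have h4 := abs_sub_abs_le_abs_sub ((f k).oddWrithe) ((f (k + 1)).oddWrithe)
        rw [abs_sub_comm] at h4
        linarith
      push_cast
      linarith
  have hz : (f m).oddWrithe = 0 := by
    rw [hfm]
    exact GaussDiagram.oddWrithe_eq_zero_of_writhePoly_eq_zero G' h0
  have := key m hstep
  rw [hf0, hz] at this
  simpa using this
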